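/- Let (V,α) be a finite-dimensional vector space over an algebraically closed field with a linear map α : V → V, and let A ⫋ B be α-invariant subspaces. Then for every integer n with dim A ≤ n ≤ dim B there exists an α-invariant subspace C with A ⊆ C ⊆ B and dim C = n. In particular there is an α-invariant subspace C with A ⊆ C ⊂ B of codimension 1 in B. -/

import Mathlib

lemma step16 {K V : Type*} [Field K] [IsAlgClosed K] [AddCommGroup V]
    [Module K V] [FiniteDimensional K V]
    (α : V →ₗ[K] V) (A B : Submodule K V) (hAB : A < B)
    (hA : ∀ x ∈ A, α x ∈ A) (hB : ∀ x ∈ B, α x ∈ B) :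
    ∃ C : Submodule K V, A ≤ C ∧ C ≤ B ∧ (∀ x ∈ C, α x ∈ C) ∧
      Module.finrank K C = Module.finrank K A + 1 := by
  set A' : Submodule K B := A.comap B.subtype with hA'def
  let f : B →ₗ[K] B := α.restrict hB
  have hfA' : A' ≤ A'.comap f := by
    intro x hx
    simpa [A', f, LinearMap.restrict_apply] using hA x.1 hx
  let g : (B ⧸ A') →ₗ[K] (B ⧸ A') := A'.mapQ A' f hfA'
  have hA'lt : A' < ⊤ := by
    rcases SetLike.exists_of_lt hAB with ⟨b, hbB, hbA⟩
    refine lt_top_iff_ne_top.2 (fun h => hbA ?_)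
    have : (⟨b, hbB⟩ : B) ∈ A' := h ▸ Submodule.mem_top
    exact this
  haveI : Nontrivial (B ⧸ A') := Submodule.Quotient.nontrivial_iff.2 hA'lt.ne
  obtain ⟨c, hc⟩ := Module.End.exists_eigenvalue (g : Module.End K (B ⧸ A'))
  obtain ⟨w, hw⟩ := hc.exists_hasEigenvector
  obtain ⟨v, rfl⟩ := A'.mkQ_surjective w
  have hvA : (v : V) ∉ A := by
    intro h
    exact hw.2 ((Submodule.Quotient.mk_eq_zero _).2 h)
  have heig : α (v : V) - c • (v : V) ∈ A := by
    have h1 : g (A'.mkQ v) = c • A'.mkQ v := hw.apply_eq_smul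
    have h2 : A'.mkQ (f v) = A'.mkQ (c • v) := by
      simpa [g, Submodule.mapQ_apply] using h1
    have h3 : f v - c • v ∈ A' := by
      rwa [← Submodule.Quotient.mk_eq_zero, Submodule.Quotient.mk_sub, sub_eq_zero]
    simpa [A', f, LinearMap.restrict_apply] using h3
  set u : V := (v : V) with hu
  refine ⟨A ⊔ Submodule.span K {u}, le_sup_left, ?_, ?_, ?_⟩
  · exact sup_le hAB.le ((Submodule.span_singleton_le_iff_mem u B).2 v.2)
  · intro x hx
    rcases Submodule.mem_sup.1 hx with ⟨a, ha, s, hs, rfl⟩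
    rcases Submodule.mem_span_singleton.1 hs with ⟨t, rfl⟩
    have : α (a + t • u) = (α a + t • (α u - c • u)) + (t * c) • u := by
      rw [map_add, map_smul]
      rw [mul_smul]
      module
    rw [this]
    exact Submodule.add_mem_sup (A.add_mem (hA a ha) (A.smul_mem t heig))
      (Submodule.smul_mem _ _ (Submodule.mem_span_singleton_self u))
  · have hu0 : u ≠ 0 := fun h => hvA (h ▸ A.zero_mem)
    have hinf : A ⊓ Submodule.span K {u} = ⊥ := by
      rw [eq_bot_iff]
      rintro x ⟨hxA, hxs⟩
      rcases Submodule.mem_span_singleton.1 hxs with ⟨t, rfl⟩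
      rcases eq_or_ne t 0 with rfl | ht
      · simp
      · have hu' : u ∈ A := by
          have h := A.smul_mem t⁻¹ hxA
          rwa [smul_smul, inv_mul_cancel₀ ht, one_smul] at h
        exact absurd hu' hvA
    have := Submodule.finrank_sup_add_finrank_inf_eq A (Submodule.span K {u})
    rw [hinf] at this
    simp [finrank_span_singleton hu0] at this
    omega


lemma iter16 {K V : Type*} [Field K] [IsAlgClosed K] [AddCommGroup V]
    [Module K V] [FiniteDimensional K V]
    (α : V →ₗ[K] V) (B : Submodule K V) (hB : ∀ x ∈ B, α x ∈ B) :
    ∀ (k : ℕ) (A : Submodule K V), A ≤ B → (∀ x ∈ A, α x ∈ A) →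
      Module.finrank K A + k ≤ Module.finrank K B →
      ∃ C : Submodule K V, A ≤ C ∧ C ≤ B ∧ (∀ x ∈ C, α x ∈ C) ∧
        Module.finrank K C = Module.finrank K A + k := by
  intro k
  induction k with
  | zero => exact fun A hAB hA _ => ⟨A, le_rfl, hAB, hA, by simp⟩
  | succ k ih =>
    intro A hAB hA hk
    have hlt : A < B := by
      rcases lt_or_eq_of_le hAB with h | rfl
      · exact h
      · omega
    obtain ⟨C₁, hAC₁, hC₁B, hC₁inv, hC₁rank⟩ := step16 α A B hlt hA hB
    obtain ⟨C, h1, h2, h3, h4⟩ := ih C₁ hC₁B hC₁inv (by omega)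
    exact ⟨C, hAC₁.trans h1, h2, h3, by omega⟩



/-- Over an algebraically closed field, between any two nested invariant subspaces
`A ⫋ B` of a finite-dimensional Hom-vector space `(V,α)` there are invariant
subspaces of every intermediate dimension; in particular there is an invariant
subspace `A ⊆ C ⊂ B` of codimension 1 in `B`. -/
theorem stmt16 {K V : Type*} [Field K] [IsAlgClosed K] [AddCommGroup V]
    [Module K V] [FiniteDimensional K V]
    (α : V →ₗ[K] V) (A B : Submodule K V) (hAB : A < B)
    (hA : ∀ x ∈ A, α x ∈ A) (hB : ∀ x ∈ B, α x ∈ B) :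
    (∀ n : ℕ, Module.finrank K A ≤ n → n ≤ Module.finrank K B →
      ∃ C : Submodule K V, A ≤ C ∧ C ≤ B ∧ (∀ x ∈ C, α x ∈ C) ∧
        Module.finrank K C = n) ∧
    (∃ C : Submodule K V, A ≤ C ∧ C < B ∧ (∀ x ∈ C, α x ∈ C) ∧
      Module.finrank K C + 1 = Module.finrank K B) := by
  have hrank : Module.finrank K A < Module.finrank K B :=
    Submodule.finrank_lt_finrank_of_lt hAB
  constructor
  · intro n hn1 hn2
    obtain ⟨C, h1, h2, h3, h4⟩ := iter16 α B hB (n - Module.finrank K A) A hAB.le hA (by omega)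
    exact ⟨C, h1, h2, h3, by omega⟩
  · obtain ⟨C, h1, h2, h3, h4⟩ := iter16 α B hB
      (Module.finrank K B - 1 - Module.finrank K A) A hAB.le hA (by omega)
    refine ⟨C, h1, lt_of_le_of_ne h2 ?_, h3, by omega⟩
    rintro rfl
    omega
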